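/- Let G ≤ Sym(M) be closed and locally oligomorphic on a countable set M. Suppose A, B, C are algebraic closures of finite subsets of M with B ⊆ C. Then there exists g in the pointwise stabilizer G_B with g(C) ∩ A = B ∩ A. -/

import Mathlib

open Pointwise

/-- Topology of pointwise convergence on the symmetric group of a (discrete) set. -/
instance permTop (M : Type*) : TopologicalSpace (Equiv.Perm M) :=
  letI : TopologicalSpace M := ⊥
  TopologicalSpace.induced
    (fun g => ((fun x => g x, fun x => g.symm x) : (M → M) × (M → M))) inferInstance

/-- A topological group is Roelcke precompact if every open neighbourhood `U` of the identity
admits a finite set `E` with `G = U * E * U`. -/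
def RoelckePrecompact (G : Type*) [Group G] [TopologicalSpace G] : Prop :=
  ∀ U : Set G, IsOpen U → (1 : G) ∈ U →
    ∃ E : Finset G, ∀ x : G, ∃ u₁ ∈ U, ∃ e ∈ E, ∃ u₂ ∈ U, x = u₁ * e * u₂

/-- `Y` is a union of finitely many `G`-orbits. -/
def IsFinOrbitUnion {X : Type*} (G : Subgroup (Equiv.Perm X)) (Y : Set X) : Prop :=
  ∃ S : Finset X, Y = ⋃ a ∈ S, MulAction.orbit G a

/-- `G` acts oligomorphically on `Y`: finitely many orbits on `Yⁿ` for all `n`. -/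
def Oligo {X : Type*} (G : Subgroup (Equiv.Perm X)) (Y : Set X) : Prop :=
  ∀ n : ℕ, ∃ T : Finset (Fin n → X), ∀ f : Fin n → X, (∀ i, f i ∈ Y) →
    ∃ t ∈ T, ∃ g ∈ G, ∀ i, g (t i) = f i

/-- `G` is locally oligomorphic on `X`. -/
def LocallyOligo {X : Type*} (G : Subgroup (Equiv.Perm X)) : Prop :=
  ∀ Y : Set X, IsFinOrbitUnion G Y → Oligo G Y

/-- The pointwise stabilizer of `E` in `G ≤ Sym(M)`. -/
def ptStab {M : Type*} (G : Subgroup (Equiv.Perm M)) (E : Set M) : Subgroup (Equiv.Perm M) :=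
  G ⊓ ⨅ a ∈ E, MulAction.stabilizer (Equiv.Perm M) a

/-- The algebraic closure of `E`: the union of the finite orbits of the pointwise
stabilizer of `E` in `G`. -/
def acl {M : Type*} (G : Subgroup (Equiv.Perm M)) (E : Set M) : Set M :=
  {x | (MulAction.orbit (ptStab G E) x).Finite}

/-- The intersection of the open finite-index subgroups of a topological group. -/
def Gcirc (G : Type*) [Group G] [TopologicalSpace G] : Subgroup G :=
  ⨅ U ∈ {U : Subgroup G | IsOpen (U : Set G) ∧ U.index ≠ 0}, U

-- probes

namespace SepProof

open Set

variable {M : Type*} {G : Subgroup (Equiv.Perm M)}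

lemma mem_ptStab {E : Set M} {g : Equiv.Perm M} :
    g ∈ ptStab G E ↔ g ∈ G ∧ ∀ a ∈ E, g a = a := by
  simp [ptStab, Subgroup.mem_inf, Subgroup.mem_iInf, MulAction.mem_stabilizer_iff,
    Equiv.Perm.smul_def]

lemma ptStab_le_G {E : Set M} : ptStab G E ≤ G := fun _ hg => (mem_ptStab.1 hg).1

lemma ptStab_anti {E F : Set M} (h : E ⊆ F) : ptStab G F ≤ ptStab G E := by
  intro g hg
  rcases mem_ptStab.1 hg with ⟨h1, h2⟩
  exact mem_ptStab.2 ⟨h1, fun a ha => h2 a (h ha)⟩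

lemma mem_orbit_sub {H : Subgroup (Equiv.Perm M)} {x y : M} :
    y ∈ MulAction.orbit H x ↔ ∃ g ∈ H, g x = y := by
  simp only [MulAction.mem_orbit_iff, Subtype.exists, Subgroup.smul_def,
    Equiv.Perm.smul_def, exists_prop]

lemma mem_acl {E : Set M} {x : M} :
    x ∈ acl G E ↔ (MulAction.orbit (ptStab G E) x).Finite := Iff.rfl

lemma subset_acl {E : Set M} : E ⊆ acl G E := by
  intro a ha
  have : MulAction.orbit (ptStab G E) a ⊆ {a} := by
    intro y hy
    rcases mem_orbit_sub.1 hy with ⟨g, hg, rfl⟩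
    simpa using (mem_ptStab.1 hg).2 a ha
  exact (Set.finite_singleton a).subset this

lemma acl_mono {E F : Set M} (h : E ⊆ F) : acl G E ⊆ acl G F := by
  intro x hx
  refine Set.Finite.subset hx ?_
  intro y hy
  rcases mem_orbit_sub.1 hy with ⟨g, hg, rfl⟩
  exact mem_orbit_sub.2 ⟨g, ptStab_anti h hg, rfl⟩

/-- orbit of a point of `acl` under an element of `ptStab` stays in `acl`, in fact
`acl` is invariant. -/
lemma acl_inv {E : Set M} {g : Equiv.Perm M} (hg : g ∈ ptStab G E) {x : M}
    (hx : x ∈ acl G E) : g x ∈ acl G E := by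
  have horb : MulAction.orbit (ptStab G E) (g x) = MulAction.orbit (ptStab G E) x := by
    apply MulAction.orbit_eq_iff.2
    exact mem_orbit_sub.2 ⟨g, hg, rfl⟩
  simpa [mem_acl, horb] using hx


lemma ptStab_conj {E : Set M} {g h : Equiv.Perm M} (hg : g ∈ G) :
    (g * h * g⁻¹) ∈ ptStab G ((fun x => g x) '' E) ↔ h ∈ ptStab G E := by
  rw [mem_ptStab, mem_ptStab]
  constructor
  · rintro ⟨h1, h2⟩
    constructor
    · have := mul_mem (mul_mem (inv_mem hg) h1) hg
      simpa [mul_assoc] using this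
    · intro a ha
      have := h2 (g a) ⟨a, ha, rfl⟩
      simp only [Equiv.Perm.mul_apply, Equiv.Perm.coe_inv, Equiv.symm_apply_apply] at this
      exact g.injective this
  · rintro ⟨h1, h2⟩
    constructor
    · exact mul_mem (mul_mem hg h1) (inv_mem hg)
    · rintro b ⟨a, ha, rfl⟩
      simp only [Equiv.Perm.mul_apply, Equiv.Perm.coe_inv, Equiv.symm_apply_apply]
      rw [h2 a ha]

lemma orbit_map {E : Set M} {g : Equiv.Perm M} (hg : g ∈ G) (x : M) :
    MulAction.orbit (ptStab G ((fun z => g z) '' E)) (g x)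
      = (fun z => g z) '' MulAction.orbit (ptStab G E) x := by
  ext y
  rw [mem_orbit_sub]
  constructor
  · rintro ⟨h, hh, rfl⟩
    refine ⟨(g⁻¹ * h * g) x, mem_orbit_sub.2 ⟨g⁻¹ * h * g, ?_, rfl⟩, by
      simp [Equiv.Perm.mul_apply]⟩
    have hconj := (ptStab_conj (E := (fun z => g z) '' E) (g := g⁻¹)
      (h := h) (inv_mem hg)).2 hh
    have himg : ((fun x => g⁻¹ x) '' ((fun z => g z) '' E)) = E := by
      ext a
      simp [Set.mem_image]
    rw [himg] at hconj
    simpa [mul_assoc] using hconj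
  · rintro ⟨z, hz, rfl⟩
    rcases mem_orbit_sub.1 hz with ⟨h, hh, rfl⟩
    refine ⟨g * h * g⁻¹, (ptStab_conj hg).2 hh, by simp [Equiv.Perm.mul_apply]⟩

lemma mem_acl_map {E : Set M} {g : Equiv.Perm M} (hg : g ∈ G) {x : M} :
    g x ∈ acl G ((fun z => g z) '' E) ↔ x ∈ acl G E := by
  rw [mem_acl, mem_acl, orbit_map hg]
  constructor
  · intro hfin
    exact Set.Finite.of_finite_image hfin (g.injective.injOn)
  · exact fun hfin => hfin.image _

lemma acl_map {E : Set M} {g : Equiv.Perm M} (hg : g ∈ G) :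
    acl G ((fun z => g z) '' E) = (fun z => g z) '' acl G E := by
  ext y
  constructor
  · intro hy
    refine ⟨g⁻¹ y, ?_, by simp⟩
    have : y = g (g⁻¹ y) := by simp
    rw [this] at hy
    exact (mem_acl_map hg).1 hy
  · rintro ⟨x, hx, rfl⟩
    exact (mem_acl_map hg).2 hx

lemma mem_Z_self {W : Finset M} {a : M} (ha : a ∈ W) :
    a ∈ ⋃ b ∈ W, MulAction.orbit G b :=
  Set.mem_biUnion ha (MulAction.mem_orbit_self a)

lemma Z_inv {W : Finset M} {g : Equiv.Perm M} (hg : g ∈ G) {x : M}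
    (hx : x ∈ ⋃ b ∈ W, MulAction.orbit G b) :
    g x ∈ ⋃ b ∈ W, MulAction.orbit G b := by
  rcases Set.mem_iUnion₂.1 hx with ⟨a, ha, hxa⟩
  rcases mem_orbit_sub.1 hxa with ⟨k, hk, rfl⟩
  exact Set.mem_biUnion ha (mem_orbit_sub.2 ⟨g * k, mul_mem hg hk, rfl⟩)

lemma olcount (holig : LocallyOligo G) (W : Finset M) {F : Set M} (hF : F.Finite)
    (hFZ : F ⊆ ⋃ a ∈ W, MulAction.orbit G a) (n : ℕ) :
    ∃ T : Finset (Fin n → M), ∀ w : Fin n → M,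
      (∀ i, w i ∈ ⋃ a ∈ W, MulAction.orbit G a) →
      ∃ t ∈ T, (∀ i, t i ∈ ⋃ a ∈ W, MulAction.orbit G a) ∧
        ∃ v ∈ ptStab G F, ∀ i, v (t i) = w i := by
  classical
  set Z := ⋃ a ∈ W, MulAction.orbit G a with hZdef
  set l : List M := hF.toFinset.toList with hldef
  set L := l.length
  set e : Fin L → M := l.get with hedef
  have he : ∀ a ∈ F, ∃ i, e i = a := by
    intro a ha
    have : a ∈ l := by
      rw [hldef, Finset.mem_toList, Set.Finite.mem_toFinset]
      exact ha
    rcases List.mem_iff_get.1 this with ⟨i, hi⟩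
    exact ⟨i, hi⟩
  have heF : ∀ i, e i ∈ F := by
    intro i
    have : e i ∈ l := by
      rw [hedef]
      exact List.get_mem l i
    rwa [hldef, Finset.mem_toList, Set.Finite.mem_toFinset] at this
  obtain ⟨T₀, hT₀⟩ := holig Z ⟨W, hZdef⟩ (L + n)
  set Q : (Fin (L + n) → M) → Prop := fun t =>
    ∃ w' : Fin n → M, (∀ i, w' i ∈ Z) ∧ ∃ g ∈ G,
      (∀ i : Fin L, g (t (Fin.castAdd n i)) = e i) ∧
      (∀ i : Fin n, g (t (Fin.natAdd L i)) = w' i) with hQdef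
  set rep : (Fin (L + n) → M) → (Fin n → M) := fun t =>
    if h : Q t then h.choose else fun i => t (Fin.natAdd L i) with hrepdef
  refine ⟨T₀.image rep, ?_⟩
  intro w hw
  have hcomb : ∀ i, (Fin.append e w) i ∈ Z := by
    intro i
    refine Fin.addCases (fun j => ?_) (fun j => ?_) i
    · rw [Fin.append_left]
      exact hFZ (heF j)
    · rw [Fin.append_right]
      exact hw j
  obtain ⟨t, ht, gw, hgw, hgwt⟩ := hT₀ (Fin.append e w) hcomb
  have hQt : Q t := by
    refine ⟨w, hw, gw, hgw, fun i => ?_, fun i => ?_⟩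
    · rw [hgwt (Fin.castAdd n i), Fin.append_left]
    · rw [hgwt (Fin.natAdd L i), Fin.append_right]
  have hrept : rep t = hQt.choose := by
    rw [hrepdef]
    exact dif_pos hQt
  obtain ⟨hch1, gs, hgs, hgse, hgsw⟩ := hQt.choose_spec
  refine ⟨rep t, Finset.mem_image_of_mem rep ht, ?_, ?_⟩
  · intro i
    rw [hrept]
    exact hch1 i
  · refine ⟨gw * gs⁻¹, mem_ptStab.2 ⟨mul_mem hgw (inv_mem hgs), ?_⟩, ?_⟩
    · intro a ha
      rcases he a ha with ⟨i, rfl⟩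
      have hinv : gs⁻¹ (e i) = t (Fin.castAdd n i) := by
        rw [← hgse i]
        simp
      rw [Equiv.Perm.mul_apply, hinv, hgwt (Fin.castAdd n i), Fin.append_left]
    · intro i
      have hinv : gs⁻¹ (rep t i) = t (Fin.natAdd L i) := by
        rw [hrept, ← hgsw i]
        simp
      rw [Equiv.Perm.mul_apply, hinv, hgwt (Fin.natAdd L i), Fin.append_right]

lemma aclInterZ (holig : LocallyOligo G) (W : Finset M) {F : Set M} (hF : F.Finite)
    (hFZ : F ⊆ ⋃ a ∈ W, MulAction.orbit G a) :
    (acl G F ∩ ⋃ a ∈ W, MulAction.orbit G a).Finite := by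
  classical
  obtain ⟨T, hT⟩ := olcount holig W hF hFZ 1
  set Z := ⋃ a ∈ W, MulAction.orbit G a
  refine Set.Finite.subset (Set.Finite.biUnion T.finite_toSet
    (fun t _ => (?_ : (if t 0 ∈ acl G F then
      MulAction.orbit (ptStab G F) (t 0) else ∅).Finite))) ?_
  · split_ifs with h
    · exact h
    · exact Set.finite_empty
  · rintro z ⟨hzacl, hzZ⟩
    obtain ⟨t, ht, htZ, v, hv, hvt⟩ := hT (fun _ => z) (fun _ => hzZ)
    have hz0 : z ∈ MulAction.orbit (ptStab G F) (t 0) :=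
      mem_orbit_sub.2 ⟨v, hv, hvt 0⟩
    have horb : MulAction.orbit (ptStab G F) z = MulAction.orbit (ptStab G F) (t 0) :=
      MulAction.orbit_eq_iff.2 hz0
    have ht0acl : t 0 ∈ acl G F := by
      rw [mem_acl, ← horb]
      exact hzacl
    refine Set.mem_biUnion ht ?_
    rw [if_pos ht0acl]
    exact hz0

lemma orb_inf_persist {E₀ T : Set M} (hT : T.Finite)
    (hTfin : ∀ t ∈ T, (MulAction.orbit (ptStab G E₀) t).Finite) {x : M}
    (hx : ¬ (MulAction.orbit (ptStab G E₀) x).Finite) :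
    ¬ (MulAction.orbit (ptStab G (E₀ ∪ T)) x).Finite := by
  classical
  intro hfin
  apply hx
  set l : List M := hT.toFinset.toList with hldef
  set s := l.length
  set τ : Fin s → M := l.get with hτdef
  have hτ1 : ∀ t ∈ T, ∃ i, τ i = t := by
    intro t ht
    have : t ∈ l := by rw [hldef, Finset.mem_toList, Set.Finite.mem_toFinset]; exact ht
    rcases List.mem_iff_get.1 this with ⟨i, hi⟩
    exact ⟨i, hi⟩
  have hτ2 : ∀ i, τ i ∈ T := by
    intro i
    have : τ i ∈ l := by rw [hτdef]; exact List.get_mem l i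
    rwa [hldef, Finset.mem_toList, Set.Finite.mem_toFinset] at this
  set OrbT : Set (Fin s → M) :=
    {w | ∃ k ∈ ptStab G E₀, ∀ i, k (τ i) = w i} with hOrbT
  have hOrbTfin : OrbT.Finite := by
    refine Set.Finite.subset (Set.Finite.pi (t := fun i => MulAction.orbit (ptStab G E₀) (τ i))
      (fun i => hTfin (τ i) (hτ2 i))) ?_
    rintro w ⟨k, hk, hw⟩
    intro i _
    exact mem_orbit_sub.2 ⟨k, hk, hw i⟩
  set kch : (Fin s → M) → Equiv.Perm M := fun w =>
    if h : ∃ k ∈ ptStab G E₀, ∀ i, k (τ i) = w i then h.choose else 1 with hkch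
  have hcover : MulAction.orbit (ptStab G E₀) x ⊆
      ⋃ w ∈ OrbT, (fun y => kch w y) '' (MulAction.orbit (ptStab G (E₀ ∪ T)) x) := by
    intro y hy
    rcases mem_orbit_sub.1 hy with ⟨k, hk, rfl⟩
    set w : Fin s → M := fun i => k (τ i) with hwdef
    have hEx : ∃ k' ∈ ptStab G E₀, ∀ i, k' (τ i) = w i := ⟨k, hk, fun i => rfl⟩
    have hwOrb : w ∈ OrbT := hEx
    obtain ⟨hr, hrτ⟩ := hEx.choose_spec
    set r := hEx.choose
    have hkchw : kch w = r := dif_pos hEx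
    have humem : r⁻¹ * k ∈ ptStab G (E₀ ∪ T) := by
      rw [mem_ptStab]
      refine ⟨mul_mem (inv_mem (ptStab_le_G hr)) (ptStab_le_G hk), ?_⟩
      intro a ha
      rcases ha with ha | ha
      · rw [Equiv.Perm.mul_apply, (mem_ptStab.1 hk).2 a ha,
          Equiv.Perm.inv_eq_iff_eq]
        exact ((mem_ptStab.1 hr).2 a ha).symm
      · rcases hτ1 a ha with ⟨i, rfl⟩
        rw [Equiv.Perm.mul_apply, Equiv.Perm.inv_eq_iff_eq]
        exact (hrτ i).symm
    refine Set.mem_biUnion hwOrb ⟨(r⁻¹ * k) x,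
      mem_orbit_sub.2 ⟨r⁻¹ * k, humem, rfl⟩, ?_⟩
    rw [hkchw]
    simp [Equiv.Perm.mul_apply]
  exact Set.Finite.subset
    (Set.Finite.biUnion hOrbTfin (fun w _ => hfin.image _)) hcover

lemma neumann {H : Subgroup (Equiv.Perm M)} (Γ Δ : Finset M)
    (hΓ : ∀ γ ∈ Γ, ¬ (MulAction.orbit H γ).Finite) :
    ∃ u ∈ H, ∀ γ ∈ Γ, u γ ∉ Δ := by
  classical
  by_contra hcon
  push_neg at hcon
  set Hs : M × M → Subgroup H := fun p => MulAction.stabilizer H p.1 with hHs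
  set gg : M × M → H := fun p =>
    if h : ∃ v : H, (v : Equiv.Perm M) p.1 = p.2 then h.choose else 1 with hgg
  have hcover : ⋃ p ∈ Γ ×ˢ Δ, (gg p) • ((Hs p) : Set H) = Set.univ := by
    refine Set.eq_univ_of_forall ?_
    intro u
    obtain ⟨γ, hγ, hδ⟩ := hcon (u : Equiv.Perm M) u.2
    have hpmem : (γ, (u : Equiv.Perm M) γ) ∈ Γ ×ˢ Δ := by
      rw [Finset.mem_product]
      exact ⟨hγ, hδ⟩
    have hEx : ∃ v : H, (v : Equiv.Perm M) γ = (u : Equiv.Perm M) γ := ⟨u, rfl⟩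
    refine Set.mem_biUnion hpmem ?_
    rw [mem_leftCoset_iff]
    have hggp : gg (γ, (u : Equiv.Perm M) γ) = hEx.choose := dif_pos hEx
    have hc := hEx.choose_spec
    rw [SetLike.mem_coe, hHs, MulAction.mem_stabilizer_iff]
    have : ((gg (γ, (u : Equiv.Perm M) γ))⁻¹ * u) • γ
        = ((gg (γ, (u : Equiv.Perm M) γ) : Equiv.Perm M)⁻¹) ((u : Equiv.Perm M) γ) := by
      rw [Subgroup.smul_def, Equiv.Perm.smul_def]
      simp [Equiv.Perm.mul_apply]
    rw [this, hggp]
    show (hEx.choose : Equiv.Perm M)⁻¹ ((u : Equiv.Perm M) γ) = γ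
    have h2 : (hEx.choose : Equiv.Perm M)⁻¹ ((hEx.choose : Equiv.Perm M) γ) = γ := by simp
    rw [hc] at h2
    exact h2
  obtain ⟨p, hp, hfi⟩ := Subgroup.exists_finiteIndex_of_leftCoset_cover hcover
  have hΓp : p.1 ∈ Γ := (Finset.mem_product.1 hp).1
  have hinf : (MulAction.orbit H p.1).Infinite := fun hf => hΓ p.1 hΓp hf
  have h0 : (MulAction.stabilizer H p.1).index = 0 := by
    rw [MulAction.index_stabilizer, Set.Infinite.ncard hinf]
  exact hfi.index_ne_zero h0

lemma fix_of_ptStab {V : Set M} {g : Equiv.Perm M} (hg : g ∈ ptStab G V) {a : M}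
    (ha : a ∈ V) : g a = a := (mem_ptStab.1 hg).2 a ha

lemma mem_closed_of_approx {S : Set (Equiv.Perm M)} (hS : IsClosed S) (h : Equiv.Perm M)
    (happ : ∀ Fs : Finset M, ∃ v ∈ S,
      (∀ a ∈ Fs, v a = h a) ∧ (∀ a ∈ Fs, v.symm a = h.symm a)) :
    h ∈ S := by
  classical
  letI : TopologicalSpace M := ⊥
  haveI : DiscreteTopology M := ⟨rfl⟩
  rw [← hS.closure_eq]
  refine (closure_induced
    (f := fun g : Equiv.Perm M =>
      ((fun x => g x, fun x => g.symm x) : (M → M) × (M → M)))).2 ?_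
  rw [mem_closure_iff]
  intro o ho hmem
  rcases isOpen_prod_iff.1 ho _ _ hmem with ⟨u1, u2, hu1, hu2, hm1, hm2, hsub⟩
  rcases isOpen_pi_iff.1 hu1 _ hm1 with ⟨I1, t1, ht1, hsub1⟩
  rcases isOpen_pi_iff.1 hu2 _ hm2 with ⟨I2, t2, ht2, hsub2⟩
  obtain ⟨v, hvS, hv1, hv2⟩ := happ (I1 ∪ I2)
  refine ⟨((fun x => v x, fun x => v.symm x) : (M → M) × (M → M)), ?_,
    Set.mem_image_of_mem _ hvS⟩
  apply hsub
  constructor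
  · apply hsub1
    intro a ha
    show v a ∈ t1 a
    rw [hv1 a (Finset.mem_union_left _ (Finset.mem_coe.1 ha))]
    exact (ht1 a (Finset.mem_coe.1 ha)).2
  · apply hsub2
    intro a ha
    show v.symm a ∈ t2 a
    rw [hv2 a (Finset.mem_union_right _ (Finset.mem_coe.1 ha))]
    exact (ht2 a (Finset.mem_coe.1 ha)).2

lemma exists_level {B' : Set M} {Cm : ℕ → Set M} (hmono : Monotone Cm)
    (habs : ∀ b ∈ B', ∃ m, b ∈ Cm m) (hB' : B'.Finite) :
    ∃ m, B' ⊆ Cm m := by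
  have key : ∀ s : Set M, s.Finite → (∀ b ∈ s, ∃ m, b ∈ Cm m) → ∃ m, s ⊆ Cm m := by
    intro s hs
    refine Set.Finite.induction_on (motive := fun s _ => (∀ b ∈ s, ∃ m, b ∈ Cm m) → ∃ m, s ⊆ Cm m)
      s hs (fun _ => ⟨0, Set.empty_subset _⟩) ?_
    intro a s _ _ ih habs2
    obtain ⟨m1, hm1⟩ := ih (fun b hb => habs2 b (Set.mem_insert_of_mem a hb))
    obtain ⟨m2, hm2⟩ := habs2 a (Set.mem_insert a s)
    refine ⟨max m1 m2, ?_⟩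
    rintro b (rfl | hb)
    · exact hmono (le_max_right m1 m2) hm2
    · exact hmono (le_max_left m1 m2) (hm1 hb)
  exact key B' hB' habs

lemma stab_orbits (holig : LocallyOligo G) (W : Finset M) {V : Set M} (hV : V.Finite)
    (hVZ : V ⊆ ⋃ a ∈ W, MulAction.orbit G a)
    {Cm : ℕ → Set M} (hmono : Monotone Cm)
    (hinv : ∀ m, ∀ s ∈ ptStab G V, ∀ c ∈ Cm m, s c ∈ Cm m)
    {n : ℕ} (wb : Fin n → M) (hwb : ∀ i, wb i ∈ ⋃ a ∈ W, MulAction.orbit G a) :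
    ∃ m₂ : ℕ, ∀ m, m₂ ≤ m → ∀ k ∈ ptStab G (V ∪ Cm m₂),
      ∃ k' ∈ ptStab G (V ∪ Cm m), ∀ i, k' (wb i) = k (wb i) := by
  classical
  have hrange : Set.range wb ⊆ ⋃ a ∈ W, MulAction.orbit G a := by
    rintro _ ⟨i, rfl⟩; exact hwb i
  have hF : (V ∪ Set.range wb).Finite := hV.union (Set.finite_range wb)
  have hFZ : V ∪ Set.range wb ⊆ ⋃ a ∈ W, MulAction.orbit G a :=
    Set.union_subset hVZ hrange
  obtain ⟨T, hT⟩ := olcount holig W hF hFZ n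
  set J : ℕ → Finset (Fin n → M) := fun m => T.filter (fun t =>
    ∃ v ∈ ptStab G (V ∪ Set.range wb), ∃ k ∈ ptStab G (V ∪ Cm m),
      ∀ i, v (t i) = k (wb i)) with hJ
  have hJanti : ∀ {m m'}, m ≤ m' → J m' ⊆ J m := by
    intro m m' hmm t ht
    rcases Finset.mem_filter.1 ht with ⟨htT, v, hv, k, hk, hvk⟩
    exact Finset.mem_filter.2 ⟨htT, v, hv, k,
      ptStab_anti (Set.union_subset_union_right V (hmono hmm)) hk, hvk⟩
  obtain ⟨m₂, hm₂⟩ : ∃ m₂, (J m₂).card = sInf (Set.range fun m => (J m).card) :=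
    Nat.sInf_mem (Set.range_nonempty _)
  have hJeq : ∀ m, m₂ ≤ m → J m = J m₂ := by
    intro m hm
    refine Finset.eq_of_subset_of_card_le (hJanti hm) ?_
    rw [hm₂]
    exact Nat.sInf_le ⟨m, rfl⟩
  refine ⟨m₂, ?_⟩
  intro m hm k hk
  obtain ⟨t, htT, htZ, v, hv, hvt⟩ := hT (fun i => k (wb i))
    (fun i => Z_inv (ptStab_le_G hk) (hwb i))
  have htJ : t ∈ J m := by
    rw [hJeq m hm]
    exact Finset.mem_filter.2 ⟨htT, v, hv, k, hk, hvt⟩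
  obtain ⟨-, v', hv', k', hk', hv't⟩ := Finset.mem_filter.1 htJ
  have hsV : v * v'⁻¹ ∈ ptStab G V :=
    ptStab_anti Set.subset_union_left (mul_mem hv (inv_mem hv'))
  have hsfix : ∀ i, (v * v'⁻¹)⁻¹ (wb i) = wb i := by
    intro i
    have : (v * v'⁻¹) ∈ ptStab G (V ∪ Set.range wb) := mul_mem hv (inv_mem hv')
    rw [Equiv.Perm.inv_eq_iff_eq]
    exact (fix_of_ptStab this (Set.mem_union_right _ ⟨i, rfl⟩)).symm
  refine ⟨(v * v'⁻¹) * k' * (v * v'⁻¹)⁻¹, ?_, ?_⟩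
  · rw [mem_ptStab]
    constructor
    · exact mul_mem (mul_mem (ptStab_le_G hsV) (ptStab_le_G hk'))
        (inv_mem (ptStab_le_G hsV))
    · rintro a (haV | haC)
      · rw [Equiv.Perm.mul_apply, Equiv.Perm.mul_apply,
          fix_of_ptStab (inv_mem hsV) haV,
          fix_of_ptStab hk' (Set.mem_union_left _ haV),
          fix_of_ptStab hsV haV]
      · have h1 : (v * v'⁻¹)⁻¹ a ∈ Cm m := hinv m _ (inv_mem hsV) a haC
        rw [Equiv.Perm.mul_apply, Equiv.Perm.mul_apply,
          fix_of_ptStab hk' (Set.mem_union_right _ h1)]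
        simp
  · intro i
    rw [Equiv.Perm.mul_apply, Equiv.Perm.mul_apply, hsfix i, ← hv't i,
      Equiv.Perm.mul_apply]
    have h3 : v'⁻¹ (v' (t i)) = t i := by simp
    rw [h3, hvt i]

section Chain

variable (holig : LocallyOligo G) {EB : Set M} (hEB : EB.Finite) {Cm : ℕ → Set M}
variable (hCmono : Monotone Cm) (hCB : ∀ m, Cm m ⊆ acl G EB)
variable (hCinv : ∀ m, ∀ s ∈ ptStab G EB, ∀ c ∈ Cm m, s c ∈ Cm m)
variable (hCabs : ∀ b ∈ acl G EB, ∃ m, b ∈ Cm m)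

/-- persistent realizability of a finite partial map -/
def LPERS (G : Subgroup (Equiv.Perm M)) (Cm : ℕ → Set M) (L : List (M × M)) : Prop :=
  ∀ m, ∃ v ∈ ptStab G (Cm m), ∀ pr ∈ L, v pr.1 = pr.2

lemma lpers_swap {L : List (M × M)} (h : LPERS G Cm L) :
    LPERS G Cm (L.map Prod.swap) := by
  intro m
  obtain ⟨v, hv, hvL⟩ := h m
  refine ⟨v⁻¹, inv_mem hv, ?_⟩
  intro pr hpr
  rcases List.mem_map.1 hpr with ⟨pr', hpr', rfl⟩
  have := hvL pr' hpr'
  rw [Prod.fst_swap, Prod.snd_swap, Equiv.Perm.inv_eq_iff_eq]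
  exact this.symm

include holig hEB hCmono hCinv hCabs in
lemma value_lemma {L : List (M × M)} (hL : LPERS G Cm L) (x : M) :
    ∃ y, LPERS G Cm ((x, y) :: L) := by
  classical
  set B := acl G EB with hBdef
  set WF : Finset M := hEB.toFinset ∪ (x :: L.map Prod.fst).toFinset with hWF
  set Zs := ⋃ a ∈ WF, MulAction.orbit G a with hZs
  have hEBZ : EB ⊆ Zs := by
    intro a ha
    exact mem_Z_self (Finset.mem_union_left _ (hEB.mem_toFinset.2 ha))
  have hBdagfin : (B ∩ Zs).Finite := aclInterZ holig WF hEB hEBZ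
  set V : Set M := EB ∪ (B ∩ Zs) with hV
  have hVfin : V.Finite := hEB.union hBdagfin
  have hVB : V ⊆ B := Set.union_subset subset_acl Set.inter_subset_left
  have hVZ : V ⊆ Zs := Set.union_subset hEBZ Set.inter_subset_right
  have hVinv : ∀ m, ∀ s ∈ ptStab G V, ∀ c ∈ Cm m, s c ∈ Cm m := by
    intro m s hs
    exact hCinv m s (ptStab_anti Set.subset_union_left hs)
  set xl : List M := x :: L.map Prod.fst with hxl
  set wb : Fin xl.length → M := xl.get with hwb
  have hwbZ : ∀ i, wb i ∈ Zs := by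
    intro i
    refine mem_Z_self (Finset.mem_union_right _ ?_)
    rw [List.mem_toFinset]
    exact xl.get_mem i
  obtain ⟨m₂, hstab⟩ := stab_orbits holig WF hVfin hVZ hCmono hVinv wb hwbZ
  obtain ⟨m₁, hm₁⟩ := exists_level hCmono (fun b hb => hCabs b (hVB hb)) hVfin
  set mh := max m₁ m₂ with hmh
  obtain ⟨vh, hvh, hvhL⟩ := hL mh
  refine ⟨vh x, ?_⟩
  intro m
  rcases le_or_gt m mh with hcase | hcase
  · refine ⟨vh, ptStab_anti (hCmono hcase) hvh, ?_⟩
    intro pr hpr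
    rcases List.mem_cons.1 hpr with rfl | hpr
    · rfl
    · exact hvhL pr hpr
  · have hsub : V ∪ Cm m₂ ⊆ Cm mh := by
      refine Set.union_subset (hm₁.trans (hCmono (le_max_left _ _)))
        (hCmono (le_max_right _ _))
    obtain ⟨k', hk', hk'w⟩ := hstab m (le_trans (le_max_right _ _) hcase.le)
      vh (ptStab_anti hsub hvh)
    have hagree : ∀ a ∈ xl, k' a = vh a := by
      intro a ha
      rcases List.mem_iff_get.1 ha with ⟨i, rfl⟩
      exact hk'w i
    refine ⟨k', ptStab_anti Set.subset_union_right hk', ?_⟩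
    intro pr hpr
    rcases List.mem_cons.1 hpr with rfl | hpr
    · show k' x = vh x
      exact hagree x (List.mem_cons_self (a := x))
    · rw [hagree pr.1 (List.mem_cons_of_mem x (List.mem_map_of_mem (f := Prod.fst) hpr))]
      exact hvhL pr hpr

include holig hEB hCmono hCinv hCabs in
lemma value_lemma_ran {L : List (M × M)} (hL : LPERS G Cm L) (z : M) :
    ∃ x, LPERS G Cm ((x, z) :: L) := by
  obtain ⟨y, hy⟩ := value_lemma holig hEB hCmono hCinv hCabs (lpers_swap hL) z
  refine ⟨y, ?_⟩
  have := lpers_swap hy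
  have heq : ((z, y) :: L.map Prod.swap).map Prod.swap = (y, z) :: L := by
    simp [List.map_map, Prod.swap]
  rwa [heq] at this


include holig hEB hCmono hCinv hCabs in
lemma limit_lemma (hclosed : IsClosed (G : Set (Equiv.Perm M)))
    (σ : ℕ → M) (hσ : Function.Surjective σ)
    (L₀ : List (M × M)) (h₀ : LPERS G Cm L₀) :
    ∃ g : Equiv.Perm M, g ∈ G ∧ (∀ b ∈ acl G EB, g b = b) ∧ ∀ pr ∈ L₀, g pr.1 = pr.2 := by
  classical
  have vl := fun (L : {L : List (M × M) // LPERS G Cm L}) (x : M) =>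
    value_lemma holig hEB hCmono hCinv hCabs L.2 x
  have vr := fun (L : {L : List (M × M) // LPERS G Cm L}) (z : M) =>
    value_lemma_ran holig hEB hCmono hCinv hCabs L.2 z
  choose fdom hfdom using vl
  choose fran hfran using vr
  let step : ℕ → {L : List (M × M) // LPERS G Cm L} → {L : List (M × M) // LPERS G Cm L} :=
    fun n Lp =>
      ⟨(fran ⟨(σ n, fdom Lp (σ n)) :: Lp.1, hfdom Lp (σ n)⟩ (σ n), σ n) ::
          (σ n, fdom Lp (σ n)) :: Lp.1,
        hfran ⟨(σ n, fdom Lp (σ n)) :: Lp.1, hfdom Lp (σ n)⟩ (σ n)⟩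
  let chain : ℕ → {L : List (M × M) // LPERS G Cm L} :=
    fun n => Nat.rec ⟨L₀, h₀⟩ (fun k ih => step k ih) n
  have hstep : ∀ n, chain (n + 1) = step n (chain n) := fun n => rfl
  have hmono1 : ∀ n, (chain n).1 ⊆ (chain (n + 1)).1 := by
    intro n
    rw [hstep n]
    intro pr hpr
    exact List.mem_cons_of_mem _ (List.mem_cons_of_mem _ hpr)
  have hmono : ∀ {n n'}, n ≤ n' → (chain n).1 ⊆ (chain n').1 := by
    intro n n' h
    induction h with
    | refl => exact fun _ h => h
    | step h ih => exact fun pr hpr => hmono1 _ (ih hpr)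
  set Mem : M × M → Prop := fun pr => ∃ n, pr ∈ (chain n).1 with hMem
  have hreal2 : ∀ pr pr', Mem pr → Mem pr' → ∀ m,
      ∃ v ∈ ptStab G (Cm m), v pr.1 = pr.2 ∧ v pr'.1 = pr'.2 := by
    rintro pr pr' ⟨n, hn⟩ ⟨n', hn'⟩ m
    obtain ⟨v, hv, hvL⟩ := (chain (max n n')).2 m
    exact ⟨v, hv, hvL pr (hmono (le_max_left _ _) hn),
      hvL pr' (hmono (le_max_right _ _) hn')⟩
  have hfun : ∀ {a b b'}, Mem (a, b) → Mem (a, b') → b = b' := by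
    intro a b b' h1 h2
    obtain ⟨v, _, hv1, hv2⟩ := hreal2 _ _ h1 h2 0
    have hv1' : v a = b := hv1
    have hv2' : v a = b' := hv2
    rw [← hv1', ← hv2']
  have hinj : ∀ {a a' b}, Mem (a, b) → Mem (a', b) → a = a' := by
    intro a a' b h1 h2
    obtain ⟨v, _, hv1, hv2⟩ := hreal2 _ _ h1 h2 0
    have hv1' : v a = b := hv1
    have hv2' : v a' = b := hv2
    exact v.injective (by rw [hv1', hv2'])
  have hdomtotal : ∀ x, ∃ y, Mem (x, y) := by
    intro x
    obtain ⟨j, rfl⟩ := hσ x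
    refine ⟨fdom (chain j) (σ j), j + 1, ?_⟩
    rw [hstep j]
    exact List.mem_cons_of_mem _ List.mem_cons_self
  have hrantotal : ∀ z, ∃ x, Mem (x, z) := by
    intro z
    obtain ⟨j, rfl⟩ := hσ z
    refine ⟨fran ⟨(σ j, fdom (chain j) (σ j)) :: (chain j).1,
      hfdom (chain j) (σ j)⟩ (σ j), j + 1, ?_⟩
    rw [hstep j]
    exact List.mem_cons_self
  set gfun : M → M := fun x => (hdomtotal x).choose with hgfun
  have hgMem : ∀ x, Mem (x, gfun x) := fun x => (hdomtotal x).choose_spec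
  have hsurj : Function.Surjective gfun := by
    intro z
    obtain ⟨x, hx⟩ := hrantotal z
    exact ⟨x, hfun (hgMem x) hx⟩
  have hginj : Function.Injective gfun := by
    intro x x' h
    exact hinj (hgMem x) (h ▸ hgMem x')
  set g : Equiv.Perm M := Equiv.ofBijective gfun ⟨hginj, hsurj⟩ with hgdef
  have hgapp : ∀ x, g x = gfun x := fun x => rfl
  have hgsymm : ∀ z, g.symm z = (hsurj z).choose := by
    intro z
    rw [Equiv.symm_apply_eq, hgapp, (hsurj z).choose_spec]
  refine ⟨g, ?_, ?_, ?_⟩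
  · refine mem_closed_of_approx hclosed g ?_
    intro Fs
    -- realize all pairs (a, gfun a) and (xa, a) for a ∈ Fs at level 0
    have hMemPairs : ∀ a : M, Mem (a, g a) ∧ Mem (g.symm a, a) := by
      intro a
      constructor
      · rw [hgapp]; exact hgMem a
      · rw [hgsymm]
        have h1 := hgMem ((hsurj a).choose)
        have h2 : gfun ((hsurj a).choose) = a := (hsurj a).choose_spec
        rwa [h2] at h1
    have hjoint : ∀ l : List M, ∃ n, ∀ a ∈ l,
        (a, g a) ∈ (chain n).1 ∧ (g.symm a, a) ∈ (chain n).1 := by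
      intro l
      induction l with
      | nil => exact ⟨0, by simp⟩
      | cons a l ih =>
        obtain ⟨n1, hn1⟩ := ih
        obtain ⟨n2, hn2⟩ := (hMemPairs a).1
        obtain ⟨n3, hn3⟩ := (hMemPairs a).2
        refine ⟨max (max n2 n3) n1, ?_⟩
        intro b hb
        rcases List.mem_cons.1 hb with rfl | hb
        · exact ⟨hmono (le_trans (le_max_left _ _) (le_max_left _ _)) hn2,
            hmono (le_trans (le_max_right _ _) (le_max_left _ _)) hn3⟩
        · exact ⟨hmono (le_max_right _ _) (hn1 b hb).1,
            hmono (le_max_right _ _) (hn1 b hb).2⟩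
    obtain ⟨n, hn⟩ := hjoint Fs.toList
    obtain ⟨v, hv, hvL⟩ := (chain n).2 0
    refine ⟨v, ptStab_le_G hv, ?_, ?_⟩
    · intro a ha
      exact hvL (a, g a) ((hn a (Finset.mem_toList.2 ha)).1)
    · intro a ha
      have := hvL (g.symm a, a) ((hn a (Finset.mem_toList.2 ha)).2)
      rw [Equiv.symm_apply_eq]
      exact this.symm
  · intro b hb
    obtain ⟨m, hbm⟩ := hCabs b hb
    obtain ⟨n, hn⟩ := hgMem b
    obtain ⟨v, hv, hvL⟩ := (chain n).2 m
    have h1 : v b = gfun b := hvL (b, gfun b) hn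
    have h2 : v b = b := fix_of_ptStab hv hbm
    rw [hgapp, ← h1, h2]
  · intro pr hpr
    have hM : Mem (pr.1, pr.2) := ⟨0, by exact hpr⟩
    rw [hgapp]
    exact hfun (hgMem pr.1) hM


lemma chain_exists {EB : Set M} (hEB : EB.Finite) (hEBB : EB ⊆ acl G EB)
    (σ : ℕ → M) (hσ : Function.Surjective σ) :
    ∃ Cm : ℕ → Set M, Monotone Cm ∧ (∀ m, (Cm m).Finite) ∧
      (∀ m, Cm m ⊆ acl G EB) ∧ (∀ m, EB ⊆ Cm m) ∧
      (∀ m, ∀ s ∈ ptStab G EB, ∀ c ∈ Cm m, s c ∈ Cm m) ∧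
      (∀ b ∈ acl G EB, ∃ m, b ∈ Cm m) := by
  classical
  set K := ptStab G EB with hK
  set orbIf : M → Set M := fun b =>
    if b ∈ acl G EB then MulAction.orbit K b else ∅ with horbIf
  have horbIfB : ∀ b, orbIf b ⊆ acl G EB := by
    intro b
    simp only [horbIf]
    split_ifs with hb
    · intro y hy
      rcases mem_orbit_sub.1 hy with ⟨k, hk, rfl⟩
      exact acl_inv hk hb
    · exact Set.empty_subset _
  have horbIfFin : ∀ b, (orbIf b).Finite := by
    intro b
    simp only [horbIf]
    split_ifs with hb
    · exact hb
    · exact Set.finite_empty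
  have horbIfInv : ∀ b, ∀ s ∈ K, ∀ c ∈ orbIf b, s c ∈ orbIf b := by
    intro b s hs c hc
    simp only [horbIf] at hc ⊢
    split_ifs with hb
    · rw [if_pos hb] at hc
      rcases mem_orbit_sub.1 hc with ⟨k, hk, rfl⟩
      exact mem_orbit_sub.2 ⟨s * k, mul_mem hs hk, rfl⟩
    · rw [if_neg hb] at hc
      exact absurd hc (Set.notMem_empty c)
  refine ⟨fun m => (⋃ b ∈ EB, MulAction.orbit K b) ∪ ⋃ i ∈ Finset.range m, orbIf (σ i),
    ?_, ?_, ?_, ?_, ?_, ?_⟩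
  · intro m m' hmm
    refine Set.union_subset_union_right _ ?_
    refine Set.iUnion₂_subset fun i hi => ?_
    exact Set.subset_iUnion₂ (s := fun i _ => orbIf (σ i)) i
      (Finset.mem_range.2 (lt_of_lt_of_le (Finset.mem_range.1 hi) hmm))
  · intro m
    refine Set.Finite.union ?_ ?_
    · refine Set.Finite.biUnion hEB fun b hb => ?_
      exact (hEBB hb)
    · exact Set.Finite.biUnion (Finset.range m).finite_toSet fun i _ => horbIfFin (σ i)
  · intro m
    refine Set.union_subset ?_ ?_
    · refine Set.iUnion₂_subset fun b hb => ?_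
      intro y hy
      rcases mem_orbit_sub.1 hy with ⟨k, hk, rfl⟩
      exact acl_inv hk (hEBB hb)
    · exact Set.iUnion₂_subset fun i _ => horbIfB (σ i)
  · intro m b hb
    exact Set.mem_union_left _ (Set.mem_biUnion hb (MulAction.mem_orbit_self b))
  · rintro m s hs c (hc | hc)
    · rcases Set.mem_iUnion₂.1 hc with ⟨b, hb, hcb⟩
      rcases mem_orbit_sub.1 hcb with ⟨k, hk, rfl⟩
      exact Set.mem_union_left _ (Set.mem_biUnion hb
        (mem_orbit_sub.2 ⟨s * k, mul_mem hs hk, rfl⟩))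
    · rcases Set.mem_iUnion₂.1 hc with ⟨i, hi, hcb⟩
      exact Set.mem_union_right _ (Set.mem_biUnion hi (horbIfInv (σ i) s hs c hcb))
  · intro b hb
    obtain ⟨j, rfl⟩ := hσ b
    refine ⟨j + 1, Set.mem_union_right _ (Set.mem_biUnion
      (Finset.mem_range.2 (Nat.lt_succ_self j)) ?_)⟩
    simp only [horbIf]
    rw [if_pos hb]
    exact MulAction.mem_orbit_self _

end Chain
end SepProof


open SepProof

/-- Separation lemma: for algebraic closures `A, B, C` of finite sets with `B ⊆ C`, there
is `g` in the pointwise stabilizer of `B` with `g(C) ∩ A = B ∩ A`. -/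
theorem separation_of_algebraic_closures {M : Type*} [Countable M]
    (G : Subgroup (Equiv.Perm M)) (hclosed : IsClosed (G : Set (Equiv.Perm M)))
    (holig : LocallyOligo G) (A B C : Set M)
    (hA : ∃ E : Set M, E.Finite ∧ A = acl G E)
    (hB : ∃ E : Set M, E.Finite ∧ B = acl G E)
    (hC : ∃ E : Set M, E.Finite ∧ C = acl G E) (hBC : B ⊆ C) :
    ∃ g ∈ ptStab G B, (fun x => g x) '' C ∩ A = B ∩ A := by
  classical
  rcases isEmpty_or_nonempty M with hM | hM
  · refine ⟨1, mem_ptStab.2 ⟨one_mem G, fun a _ => rfl⟩, ?_⟩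
    rw [Set.eq_empty_of_isEmpty ((fun x => (1 : Equiv.Perm M) x) '' C ∩ A),
      Set.eq_empty_of_isEmpty (B ∩ A)]
  obtain ⟨σ, hσ⟩ := exists_surjective_nat M
  obtain ⟨EA, hEAfin, hAeq⟩ := hA
  obtain ⟨EB, hEBfin, hBeq⟩ := hB
  obtain ⟨EC, hECfin, hCeq⟩ := hC
  set E : Set M := EA ∪ EB ∪ EC with hE
  have hEfin : E.Finite := (hEAfin.union hEBfin).union hECfin
  set N := acl G E with hN
  have hAN : A ⊆ N := by
    rw [hAeq, hN]
    exact acl_mono (Set.subset_union_left.trans Set.subset_union_left)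
  have hCN : C ⊆ N := by
    rw [hCeq, hN]
    exact acl_mono Set.subset_union_right
  have hEBE : EB ⊆ E := Set.subset_union_right.trans Set.subset_union_left
  have hEBB : EB ⊆ B := by rw [hBeq]; exact subset_acl
  -- the exhaustion chain for B
  obtain ⟨Cm, hCmono, hCfin, hCB0, hCEB, hCinv0, hCabs0⟩ :=
    chain_exists (G := G) hEBfin subset_acl σ hσ
  have hCB : ∀ m, Cm m ⊆ B := by intro m; rw [hBeq]; exact hCB0 m
  have hCabs : ∀ b ∈ B, ∃ m, b ∈ Cm m := by
    intro b hb
    exact hCabs0 b (by rwa [hBeq] at hb)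
  -- enumeration of E
  set lE : List M := hEfin.toFinset.toList with hlE
  set kE := lE.length with hkE
  set eE : Fin kE → M := lE.get with heE
  have heEE : ∀ i, eE i ∈ E := by
    intro i
    have : eE i ∈ lE := by rw [heE]; exact List.get_mem lE i
    rwa [hlE, Finset.mem_toList, Set.Finite.mem_toFinset] at this
  have heEsurj : ∀ a ∈ E, ∃ i, eE i = a := by
    intro a ha
    have : a ∈ lE := by
      rw [hlE, Finset.mem_toList, Set.Finite.mem_toFinset]; exact ha
    rcases List.mem_iff_get.1 this with ⟨i, hi⟩
    exact ⟨i, hi⟩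
  have hrangeE : Set.range eE = E := by
    apply Set.Subset.antisymm
    · rintro _ ⟨i, rfl⟩; exact heEE i
    · intro a ha; exact heEsurj a ha
  -- Z
  set WE : Finset M := hEfin.toFinset with hWE
  set Z := ⋃ a ∈ WE, MulAction.orbit G a with hZ
  have hEZ : ∀ a ∈ E, a ∈ Z := by
    intro a ha
    exact mem_Z_self (hEfin.mem_toFinset.2 ha)
  have hEBZ : EB ⊆ Z := fun a ha => hEZ a (hEBE ha)
  have hB0fin : (B ∩ Z).Finite := by
    rw [hBeq]
    exact aclInterZ holig WE hEBfin hEBZ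
  have hF1 : (E ∪ B ∩ Z).Finite := hEfin.union hB0fin
  have hF1Z : E ∪ B ∩ Z ⊆ Z := Set.union_subset (fun a ha => hEZ a ha) Set.inter_subset_right
  obtain ⟨T, hT⟩ := olcount holig WE hF1 hF1Z kE
  -- witnesses and Zstar
  set xw : (Fin kE → M) → M := fun t =>
    if h : ((acl G (Set.range t) ∩ N) \ B).Nonempty then h.choose else σ 0 with hxw
  set XF : Finset M := T.image xw with hXF
  set Wstar : Finset M := WE ∪ XF with hWstar
  set Zstar := ⋃ a ∈ Wstar, MulAction.orbit G a with hZstar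
  have hZZstar : ∀ x ∈ Z, x ∈ Zstar := by
    intro x hx
    rcases Set.mem_iUnion₂.1 hx with ⟨a, ha, hxa⟩
    exact Set.mem_biUnion (Finset.mem_union_left _ ha) hxa
  have hEZstar : ∀ a ∈ E, a ∈ Zstar := fun a ha => hZZstar a (hEZ a ha)
  have hNZfin : (N ∩ Zstar).Finite := by
    rw [hN]
    exact aclInterZ holig Wstar hEfin (fun a ha => hEZstar a ha)
  have hB0sfin : (B ∩ Zstar).Finite := by
    rw [hBeq]
    exact aclInterZ holig Wstar hEBfin (fun a ha => hEZstar a (hEBE ha))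
  set Vstar : Set M := EB ∪ B ∩ Zstar with hVstar
  have hVfin : Vstar.Finite := hEBfin.union hB0sfin
  have hVZstar : Vstar ⊆ Zstar :=
    Set.union_subset (fun a ha => hEZstar a (hEBE ha)) Set.inter_subset_right
  have hVB : Vstar ⊆ B := Set.union_subset hEBB Set.inter_subset_left
  have hVinv : ∀ m, ∀ s ∈ ptStab G Vstar, ∀ c ∈ Cm m, s c ∈ Cm m := by
    intro m s hs
    exact hCinv0 m s (ptStab_anti Set.subset_union_left hs)
  have heEZstar : ∀ i, eE i ∈ Zstar := fun i => hEZstar _ (heEE i)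
  obtain ⟨m₂, hstab⟩ := stab_orbits holig Wstar hVfin hVZstar hCmono hVinv eE heEZstar
  obtain ⟨m₀, hm₀⟩ := exists_level hCmono (fun b hb => hCabs b (hVB hb)) hVfin
  set mh := max m₀ m₂ with hmh
  -- Neumann
  have hΓfin : ((N ∩ Zstar) \ B).Finite := hNZfin.subset Set.diff_subset
  have horbinf : ∀ γ ∈ hΓfin.toFinset,
      ¬ (MulAction.orbit (ptStab G (Vstar ∪ Cm mh)) γ).Finite := by
    intro γ hγ
    have hγ' : γ ∈ (N ∩ Zstar) \ B := hΓfin.mem_toFinset.1 hγ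
    have hbase : ¬ (MulAction.orbit (ptStab G EB) γ).Finite := by
      intro hf
      exact hγ'.2 (by rw [hBeq]; exact mem_acl.2 hf)
    have hTfin2 : (Vstar ∪ Cm mh).Finite := hVfin.union (hCfin mh)
    have hTorb : ∀ t ∈ Vstar ∪ Cm mh, (MulAction.orbit (ptStab G EB) t).Finite := by
      intro t ht
      have htB : t ∈ B := by
        rcases ht with h | h
        · exact hVB h
        · exact hCB mh h
      rw [hBeq] at htB
      exact mem_acl.1 htB
    have hper := orb_inf_persist hTfin2 hTorb hbase
    have hEBV : EB ⊆ Vstar ∪ Cm mh :=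
      (Set.subset_union_left (s := EB) (t := B ∩ Zstar)).trans Set.subset_union_left
    have hsetEq : EB ∪ (Vstar ∪ Cm mh) = Vstar ∪ Cm mh :=
      Set.union_eq_self_of_subset_left hEBV
    rwa [hsetEq] at hper
  obtain ⟨u, hu, huΓ⟩ := neumann hΓfin.toFinset hNZfin.toFinset horbinf
  -- separation inside Zstar
  have hstar : ∀ y, y ∈ (fun z => u z) '' N → y ∈ N → y ∈ Zstar → y ∈ B := by
    rintro y ⟨xt, hxtN, rfl⟩ hyN hyZ
    have hxtZ : xt ∈ Zstar := by
      have h1 : u⁻¹ (u xt) ∈ Zstar := Z_inv (inv_mem (ptStab_le_G hu)) hyZ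
      simpa using h1
    by_cases hxtB : xt ∈ B
    · have h5 : u xt = xt :=
        fix_of_ptStab hu (Set.mem_union_left _ (Set.mem_union_right _ ⟨hxtB, hxtZ⟩))
      show u xt ∈ B
      rw [h5]
      exact hxtB
    · exfalso
      have hΓmem : xt ∈ hΓfin.toFinset := hΓfin.mem_toFinset.2 ⟨⟨hxtN, hxtZ⟩, hxtB⟩
      exact huΓ xt hΓmem (hNZfin.mem_toFinset.2 ⟨hyN, hyZ⟩)
  -- transport through classes
  set tstar : Fin kE → M := fun i => u (eE i) with htstar
  have htstarZ : ∀ i, tstar i ∈ Z := fun i => Z_inv (ptStab_le_G hu) (hEZ _ (heEE i))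
  obtain ⟨t₀, ht₀T, ht₀Z, v, hv, hvt⟩ := hT tstar htstarZ
  have hvG : v ∈ G := ptStab_le_G hv
  have hvE : v ∈ ptStab G E := ptStab_anti Set.subset_union_left hv
  have hvEB : v ∈ ptStab G EB := ptStab_anti (hEBE.trans Set.subset_union_left) hv
  have hrtstar : Set.range tstar = (fun z => u z) '' E := by
    rw [← hrangeE]
    exact Set.range_comp (fun z => u z) eE
  have hatstar : acl G (Set.range tstar) = (fun z => u z) '' N := by
    rw [hrtstar, hN]
    exact acl_map (ptStab_le_G hu)
  have hrt0 : (fun z => v z) '' Set.range t₀ = Set.range tstar := by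
    rw [← Set.range_comp]
    exact congrArg Set.range (funext hvt)
  have hat0 : acl G (Set.range tstar) = (fun z => v z) '' acl G (Set.range t₀) := by
    rw [← hrt0]
    exact acl_map hvG
  -- goodness
  have hgood : ∀ y, y ∈ (fun z => u z) '' N → y ∈ N → y ∈ B := by
    intro y hyu hyN
    by_contra hyB
    have hyacl : y ∈ (fun z => v z) '' acl G (Set.range t₀) := by
      rw [← hat0, hatstar]
      exact hyu
    obtain ⟨w, hw, rfl⟩ := hyacl
    have hwN : w ∈ N := by
      have h2 : v⁻¹ (v w) ∈ acl G E := acl_inv (inv_mem hvE) (by rw [← hN]; exact hyN)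
      rw [hN]
      simpa using h2
    have hwB : w ∉ B := by
      intro hwB
      apply hyB
      rw [hBeq] at hwB ⊢
      exact acl_inv hvEB hwB
    have hne : ((acl G (Set.range t₀) ∩ N) \ B).Nonempty := ⟨w, ⟨hw, hwN⟩, hwB⟩
    have hx0 : xw t₀ ∈ (acl G (Set.range t₀) ∩ N) \ B := by
      have : xw t₀ = hne.choose := by
        simp only [hxw]
        exact dif_pos hne
      rw [this]
      exact hne.choose_spec
    have hx0X : xw t₀ ∈ XF := Finset.mem_image_of_mem xw ht₀T
    have hx0Z : xw t₀ ∈ Zstar := mem_Z_self (Finset.mem_union_right _ hx0X)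
    have hpush : v (xw t₀) ∈ B := by
      apply hstar
      · rw [← hatstar, hat0]
        exact Set.mem_image_of_mem _ hx0.1.1
      · rw [hN]
        exact acl_inv hvE (by rw [← hN]; exact hx0.1.2)
      · exact Z_inv hvG hx0Z
    apply hx0.2
    rw [hBeq] at hpush ⊢
    have h4 := acl_inv (inv_mem hvEB) hpush
    simpa using h4
  -- per-level realizers for the initial list
  have hL0 : LPERS G Cm (List.ofFn (fun i => (eE i, tstar i))) := by
    intro m
    rcases le_or_gt m mh with hc | hc
    · refine ⟨u, ptStab_anti ((hCmono hc).trans Set.subset_union_right) hu, ?_⟩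
      intro pr hpr
      rcases List.mem_ofFn.1 hpr with ⟨i, rfl⟩
      rfl
    · have husub : u ∈ ptStab G (Vstar ∪ Cm m₂) :=
        ptStab_anti (Set.union_subset_union_right _ (hCmono (le_max_right m₀ m₂))) hu
      obtain ⟨k', hk', hk'e⟩ := hstab m (le_trans (le_max_right _ _) hc.le) u husub
      refine ⟨k', ptStab_anti Set.subset_union_right hk', ?_⟩
      intro pr hpr
      rcases List.mem_ofFn.1 hpr with ⟨i, rfl⟩
      exact hk'e i
  obtain ⟨g, hgG, hgB, hgL⟩ :=
    limit_lemma holig hEBfin hCmono hCinv0 hCabs0 hclosed σ hσ _ hL0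
  have hgfix : ∀ b ∈ B, g b = b := by
    intro b hb
    exact hgB b (by rwa [hBeq] at hb)
  have hge : ∀ i, g (eE i) = tstar i := by
    intro i
    exact hgL (eE i, tstar i) (by rw [List.mem_ofFn]; exact ⟨i, rfl⟩)
  have hkey : ∀ y, y ∈ (fun z => g z) '' N → y ∈ N → y ∈ B := by
    intro y hyg hyN
    have hcomp : ((fun z => g z) ∘ eE) = tstar := funext hge
    have hrg : (fun z => g z) '' E = Set.range tstar := by
      rw [← hrangeE, ← Set.range_comp, hcomp]
    have himg : (fun z => g z) '' N = (fun z => u z) '' N := by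
      rw [hN, ← acl_map hgG, ← hN, hrg, hatstar]
    rw [himg] at hyg
    exact hgood y hyg hyN
  refine ⟨g, mem_ptStab.2 ⟨hgG, fun a ha => hgfix a ha⟩, ?_⟩
  apply Set.Subset.antisymm
  · rintro y ⟨⟨c, hcC, rfl⟩, hyA⟩
    exact ⟨hkey (g c) ⟨c, hCN hcC, rfl⟩ (hAN hyA), hyA⟩
  · rintro y ⟨hyB, hyA⟩
    exact ⟨⟨y, hBC hyB, hgfix y hyB⟩, hyA⟩
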